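/- Let X be a real Banach space and let (S(t))_{t ≥ 0} be a continuous semigroup of contractions on X which moreover satisfies ‖S(t)‖_{op} ≤ c e^{−t/2} for some constant c > 0 and all t ≥ 0. Let g : [0, ∞) → X be continuous with range contained in a compact subset K of X. Then the family {V(t) : t ≥ 0}, where V(t) := ∫₀ᵗ S(s) g(t−s) ds (Bochner integral), is totally bounded in X. -/

import Mathlib

open MeasureTheory Set

lemma semigroup_joint_cont {X : Type*} [NormedAddCommGroup X] [NormedSpace ℝ X]
    (S : ℝ → X →L[ℝ] X) (hS_contr : ∀ t ≥ (0:ℝ), ‖S t‖ ≤ 1)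
    (hS_cont : ∀ x : X, ContinuousOn (fun t => S t x) (Set.Ici (0:ℝ))) :
    ContinuousOn (fun p : ℝ × X => S p.1 p.2) (Set.Ici (0:ℝ) ×ˢ Set.univ) := by
  rintro ⟨t₀, x₀⟩ ⟨ht₀, -⟩
  have h1 : ContinuousWithinAt (fun p : ℝ × X => S p.1 x₀) (Set.Ici (0:ℝ) ×ˢ Set.univ) (t₀, x₀) :=
    ContinuousWithinAt.comp (g := fun t => S t x₀) (f := Prod.fst) (x := (t₀, x₀))
      (s := Set.Ici (0:ℝ) ×ˢ (Set.univ : Set X)) (hS_cont x₀ t₀ ht₀) continuous_fst.continuousWithinAt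
      (fun _ hp => hp.1)
  have h2 : Filter.Tendsto (fun p : ℝ × X => S p.1 (p.2 - x₀))
      (nhdsWithin (t₀, x₀) (Set.Ici (0:ℝ) ×ˢ Set.univ)) (nhds 0) := by
    apply squeeze_zero_norm' (a := fun p : ℝ × X => ‖p.2 - x₀‖)
    · filter_upwards [self_mem_nhdsWithin] with p hp
      calc ‖S p.1 (p.2 - x₀)‖ ≤ ‖S p.1‖ * ‖p.2 - x₀‖ := (S p.1).le_opNorm _
        _ ≤ 1 * ‖p.2 - x₀‖ := mul_le_mul_of_nonneg_right (hS_contr _ hp.1) (norm_nonneg _)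
        _ = ‖p.2 - x₀‖ := one_mul _
    · have : Filter.Tendsto (fun p : ℝ × X => ‖p.2 - x₀‖) (nhds (t₀, x₀)) (nhds ‖x₀ - x₀‖) :=
        ((continuous_snd.sub continuous_const).norm).tendsto _
      simpa using this.mono_left nhdsWithin_le_nhds
  have : Filter.Tendsto (fun p : ℝ × X => S p.1 (p.2 - x₀) + S p.1 x₀)
      (nhdsWithin (t₀, x₀) (Set.Ici (0:ℝ) ×ˢ Set.univ)) (nhds (0 + S t₀ x₀)) := h2.add h1
  simpa [ContinuousWithinAt, map_sub] using this

lemma exp_half_integral (T t : ℝ) :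
    ∫ s in T..t, Real.exp (-s/2) = 2 * Real.exp (-T/2) - 2 * Real.exp (-t/2) := by
  have : ∀ x ∈ uIcc T t, HasDerivAt (fun x => -2 * Real.exp (-x/2)) (Real.exp (-x/2)) x := by
    intro x _
    have h1 : HasDerivAt (fun x : ℝ => -x/2) (-1/2) x := by
      simpa using ((hasDerivAt_id x).neg.div_const 2)
    have := ((Real.hasDerivAt_exp (-x/2)).comp x h1).const_mul (-2)
    exact this.congr_deriv (by ring)
  rw [intervalIntegral.integral_eq_sub_of_hasDerivAt this
    (Real.continuous_exp.comp (by continuity)).continuousOn.intervalIntegrable]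
  ring

/-- If the contraction semigroup `S` additionally decays like
`‖S t‖ ≤ c * exp (-t/2)` and `g : [0, ∞) → X` is continuous with range contained in a
compact set `K`, then the family `{V t : t ≥ 0}`, where
`V t = ∫ s in 0..t, S s (g (t - s))`, is totally bounded in `X`. -/
theorem totallyBounded_convolution_family
    {X : Type*} [NormedAddCommGroup X] [NormedSpace ℝ X] [CompleteSpace X]
    (S : ℝ → X →L[ℝ] X)
    (hS_contr : ∀ t ≥ (0:ℝ), ‖S t‖ ≤ 1)
    (hS_zero : S 0 = ContinuousLinearMap.id ℝ X)
    (hS_add : ∀ s ≥ (0:ℝ), ∀ t ≥ (0:ℝ), S (s + t) = (S s).comp (S t))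
    (hS_cont : ∀ x : X, ContinuousOn (fun t => S t x) (Set.Ici (0:ℝ)))
    (c : ℝ) (hc : 0 < c)
    (hS_decay : ∀ t ≥ (0:ℝ), ‖S t‖ ≤ c * Real.exp (-t / 2))
    (g : ℝ → X) (hg_cont : ContinuousOn g (Set.Ici 0))
    (K : Set X) (hK : IsCompact K) (hgK : ∀ t ≥ (0:ℝ), g t ∈ K) :
    TotallyBounded ((fun t => ∫ s in (0:ℝ)..t, S s (g (t - s))) '' Set.Ici 0) := by
  obtain ⟨M₀, hM₀⟩ := isBounded_iff_forall_norm_le.1 hK.isBounded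
  set M := max M₀ 1 with hMdef
  have hMpos : (0:ℝ) < M := lt_of_lt_of_le one_pos (le_max_right _ _)
  have hM : ∀ x ∈ K, ‖x‖ ≤ M := fun x hx => (hM₀ x hx).trans (le_max_left _ _)
  have hjoint := semigroup_joint_cont S hS_contr hS_cont
  have hcont : ∀ t ≥ (0:ℝ), ContinuousOn (fun s => S s (g (t - s))) (Icc 0 t) := by
    intro t ht
    have h1 : ContinuousOn (fun s : ℝ => (s, g (t - s))) (Icc 0 t) := by
      refine continuousOn_id.prodMk ?_
      refine hg_cont.comp (Continuous.continuousOn (by continuity)) ?_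
      intro s hs
      exact sub_nonneg.2 hs.2
    exact hjoint.comp h1 (fun s hs => ⟨hs.1, mem_univ _⟩)
  have hint : ∀ t ≥ (0:ℝ), ∀ a b : ℝ, a ∈ Icc 0 t → b ∈ Icc 0 t →
      IntervalIntegrable (fun s => S s (g (t - s))) volume a b :=
    fun t ht a b ha hb => ((hcont t ht).mono (uIcc_subset_Icc ha hb)).intervalIntegrable
  rw [Metric.totallyBounded_iff]
  intro ε hε
  -- choose T
  obtain ⟨T, hTe, hT0⟩ : ∃ T : ℝ, 2*c*M*Real.exp (-T/2) < ε/2 ∧ 0 ≤ T := by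
    have h0 : Filter.Tendsto (fun T : ℝ => -T/2) Filter.atTop Filter.atBot := by
      have h1 : Filter.Tendsto (fun T : ℝ => T/2) Filter.atTop Filter.atTop :=
        Filter.tendsto_id.atTop_div_const two_pos
      exact (Filter.tendsto_neg_atTop_atBot.comp h1).congr fun T => (neg_div _ _).symm
    have htend : Filter.Tendsto (fun T : ℝ => 2*c*M*Real.exp (-T/2)) Filter.atTop (nhds 0) := by
      have := (Real.tendsto_exp_atBot.comp h0).const_mul (2*c*M)
      simpa [Function.comp] using this
    exact ((htend.eventually (gt_mem_nhds (half_pos hε))).and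
      (Filter.eventually_ge_atTop 0)).exists
  -- the compact sets
  set D := (fun p : ℝ × X => S p.1 p.2) '' (Icc (0:ℝ) T ×ˢ K) with hD
  have hDcomp : IsCompact D := (isCompact_Icc.prod hK).image_of_continuousOn
    (hjoint.mono (fun p hp => ⟨hp.1.1, mem_univ _⟩))
  set A := closure (convexHull ℝ D) with hA
  have hAconv : Convex ℝ A := (convex_convexHull ℝ D).closure
  have hAclosed : IsClosed A := isClosed_closure
  have hAcomp : IsCompact A := by
    rw [hA]
    exact TotallyBounded.isCompact_of_isClosed
      ((totallyBounded_convexHull.2 hDcomp.totallyBounded).closure) isClosed_closure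
  have hDA : D ⊆ A := (subset_convexHull ℝ D).trans subset_closure
  set C := (fun p : ℝ × X => p.1 • p.2) '' (Icc (0:ℝ) T ×ˢ A) with hC
  have hCcomp : IsCompact C := (isCompact_Icc.prod hAcomp).image
    (continuous_fst.smul continuous_snd)
  -- key membership
  have hmem : ∀ t ≥ (0:ℝ), (∫ s in (0:ℝ)..(min t T), S s (g (t - s))) ∈ C := by
    intro t ht
    set τ := min t T with hτ
    have hτ0 : 0 ≤ τ := le_min ht hT0
    have hτT : τ ≤ T := min_le_right _ _
    have hτt : τ ≤ t := min_le_left _ _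
    rcases eq_or_lt_of_le hτ0 with h0 | h0
    · refine ⟨(0, S 0 (g 0)), ⟨⟨le_rfl, hT0⟩,
        hDA ⟨(0, g 0), ⟨⟨le_rfl, hT0⟩, hgK 0 le_rfl⟩, rfl⟩⟩, ?_⟩
      simp [← h0]
    · have hfi : IntegrableOn (fun s => S s (g (t - s))) (Ioc 0 τ) volume :=
        (((hcont t ht).mono (Icc_subset_Icc le_rfl hτt)).integrableOn_Icc).mono_set
          Ioc_subset_Icc_self
      have havg : (⨍ s in Ioc (0:ℝ) τ, S s (g (t - s))) ∈ A := by
        refine hAconv.set_average_mem hAclosed ?_ ?_ ?_ hfi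
        · rw [Real.volume_Ioc]
          simp [h0]
        · exact (measure_Ioc_lt_top).ne
        · rw [ae_restrict_iff' measurableSet_Ioc]
          refine Filter.Eventually.of_forall fun s hs => hDA
            ⟨(s, g (t - s)), ⟨⟨hs.1.le, hs.2.trans hτT⟩, hgK _ ?_⟩, rfl⟩
          have := hs.2
          linarith
      refine ⟨(τ, ⨍ s in Ioc (0:ℝ) τ, S s (g (t - s))), ⟨⟨hτ0, hτT⟩, havg⟩, ?_⟩
      have hvol : (volume (Ioc (0:ℝ) τ)).toReal = τ := by
        rw [Real.volume_Ioc]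
        simp [ENNReal.toReal_ofReal hτ0]
      show τ • (⨍ s in Ioc (0:ℝ) τ, S s (g (t - s))) = _
      rw [setAverage_eq, intervalIntegral.integral_of_le hτ0, measureReal_def, hvol, smul_smul,
        mul_inv_cancel₀ (ne_of_gt h0), one_smul]
  -- finite net of C
  obtain ⟨N, hNfin, hNC⟩ := Metric.totallyBounded_iff.1 hCcomp.totallyBounded (ε/2) (half_pos hε)
  refine ⟨N, hNfin, ?_⟩
  rintro - ⟨t, ht, rfl⟩
  have ht : (0:ℝ) ≤ t := ht
  have hVW : ‖(∫ s in (0:ℝ)..t, S s (g (t - s))) -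
      (∫ s in (0:ℝ)..(min t T), S s (g (t - s)))‖ < ε/2 := by
    rcases le_total t T with htT | hTt
    · simp [min_eq_left htT, half_pos hε]
    · rw [min_eq_right hTt]
      have hi1 : IntervalIntegrable (fun s => S s (g (t - s))) volume 0 t :=
        hint t ht 0 t ⟨le_rfl, ht⟩ ⟨ht, le_rfl⟩
      have hi2 : IntervalIntegrable (fun s => S s (g (t - s))) volume 0 T :=
        hint t ht 0 T ⟨le_rfl, ht⟩ ⟨hT0, hTt⟩
      rw [intervalIntegral.integral_interval_sub_left hi1 hi2]
      calc ‖∫ s in T..t, S s (g (t - s))‖ ≤ |∫ s in T..t, c * M * Real.exp (-s/2)| := by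
            apply intervalIntegral.norm_integral_le_abs_of_norm_le
            · rw [ae_restrict_iff' measurableSet_uIoc]
              refine Filter.Eventually.of_forall fun s hs => ?_
              rw [uIoc_of_le hTt] at hs
              have hs0 : (0:ℝ) ≤ s := hT0.trans hs.1.le
              have hgM : ‖g (t - s)‖ ≤ M := hM _ (hgK _ (by linarith [hs.2]))
              calc ‖S s (g (t - s))‖ ≤ ‖S s‖ * ‖g (t - s)‖ := (S s).le_opNorm _
                _ ≤ (c * Real.exp (-s/2)) * M :=
                    mul_le_mul (by simpa using hS_decay s hs0) hgM (norm_nonneg _)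
                      (by positivity)
                _ = c * M * Real.exp (-s/2) := by ring
            · exact Continuous.intervalIntegrable
                (continuous_const.mul (Real.continuous_exp.comp
                  (continuous_id.neg.div_const 2))) _ _
        _ = c * M * (2 * Real.exp (-T/2) - 2 * Real.exp (-t/2)) := by
            rw [intervalIntegral.integral_const_mul, exp_half_integral, abs_of_nonneg]
            have h1 := Real.exp_le_exp.2 (by linarith : -t/2 ≤ -T/2)
            exact mul_nonneg (mul_pos hc hMpos).le (by linarith)
        _ ≤ 2*c*M*Real.exp (-T/2) := by
            nlinarith [mul_pos (mul_pos hc hMpos) (Real.exp_pos (-t/2))]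
        _ < ε/2 := hTe
  obtain ⟨y, hyN, hy⟩ := mem_iUnion₂.1 (hNC (hmem t ht))
  refine mem_iUnion₂.2 ⟨y, hyN, ?_⟩
  rw [Metric.mem_ball] at hy ⊢
  have htri := dist_triangle (∫ s in (0:ℝ)..t, S s (g (t - s)))
    (∫ s in (0:ℝ)..(min t T), S s (g (t - s))) y
  simp only [dist_eq_norm] at htri hy ⊢
  show ‖(∫ s in (0:ℝ)..t, S s (g (t - s))) - y‖ < ε
  linarith
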